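/- Let λ be an infinite cardinal and suppose λ (viewed as the set of ordinals below λ) equals ⋃{W_z : z ∈ Z} (not necessarily disjoint), where 2^{|Z|} < λ. Then sup{otp(W_z) : z ∈ Z} = λ. -/

import Mathlib

/-- The order type of a set of ordinals. -/
noncomputable def otp (s : Set Ordinal) : Ordinal.{1} :=
  Ordinal.type ((· < ·) : s → s → Prop)

theorem otp_mono {s t : Set Ordinal} (h : s ⊆ t) : otp s ≤ otp t := by
  have f : ((· < ·) : s → s → Prop) ↪r ((· < ·) : t → t → Prop) :=
    ⟨⟨Set.inclusion h, Set.inclusion_injective h⟩, Iff.rfl⟩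
  exact f.ordinal_type_le

theorem otp_Iio (o : Ordinal.{0}) : otp (Set.Iio o) = Ordinal.lift.{1} o := by
  have := @RelIso.ordinal_lift_type_eq _ _ _ _ inferInstance isWellOrder_lt
    (Ordinal.ToType.mk (o := o)).toRelIsoLT
  rw [Ordinal.lift_uzero, Ordinal.type_toType] at this
  exact this

theorem card_otp (s : Set Ordinal) : (otp s).card = Cardinal.mk s :=
  Ordinal.card_type _

/-- if an infinite cardinal `λ` (viewed as the set of ordinals `< λ`) equals
`⋃{W_z : z ∈ Z}` (not necessarily disjoint) where `2^|Z| < λ`, then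
`sup{otp W_z : z ∈ Z} = λ`. -/
theorem stmt7 (lam : Cardinal) (hlam : Cardinal.aleph0 ≤ lam)
    {Z : Type} (W : Z → Set Ordinal)
    (hcov : ⋃ z, W z = Set.Iio lam.ord)
    (hZ : (2 : Cardinal) ^ Cardinal.mk Z < lam) :
    ⨆ z, otp (W z) = Ordinal.lift.{1} lam.ord := by
  have hlam0 : (0 : Ordinal) < lam.ord := by
    rw [Cardinal.lt_ord]
    simpa using lt_of_lt_of_le Cardinal.aleph0_pos hlam
  have hne : Nonempty Z := by
    have : (0 : Ordinal) ∈ ⋃ z, W z := by rw [hcov]; exact hlam0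
    obtain ⟨_, ⟨z, rfl⟩, _⟩ := this
    exact ⟨z⟩
  have hsub : ∀ z, W z ⊆ Set.Iio lam.ord := fun z => by
    rw [← hcov]; exact Set.subset_iUnion W z
  -- upper bound
  have hub : ⨆ z, otp (W z) ≤ Ordinal.lift.{1} lam.ord :=
    ciSup_le fun z => (otp_mono (hsub z)).trans_eq (otp_Iio _)
  refine le_antisymm hub ?_
  -- lower bound
  set o := ⨆ z, otp (W z) with ho
  have hbdd : BddAbove (Set.range fun z => otp (W z)) :=
    ⟨Ordinal.lift.{1} lam.ord, by rintro _ ⟨z, rfl⟩; exact (otp_mono (hsub z)).trans_eq (otp_Iio _)⟩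
  have hcard : ∀ z, Cardinal.mk (W z) ≤ o.card := fun z => by
    rw [← card_otp]
    exact Ordinal.card_le_card (le_ciSup hbdd z)
  have hmk : Cardinal.mk (Set.Iio lam.ord : Set Ordinal) = Cardinal.lift.{1} lam := by
    rw [Ordinal.mk_Iio_ordinal, Cardinal.card_ord]
  have h2 := Cardinal.mk_iUnion_le_lift W
  rw [hcov] at h2
  simp only [Cardinal.lift_uzero, hmk] at h2
  have h3 : (⨆ z, Cardinal.mk (W z)) ≤ o.card := ciSup_le hcard
  have h4 : Cardinal.lift.{1} lam ≤ Cardinal.lift.{1} (Cardinal.mk Z) * o.card :=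
    h2.trans (mul_le_mul_right h3 _)
  have hZlt : Cardinal.lift.{1} (Cardinal.mk Z) < Cardinal.lift.{1} lam :=
    Cardinal.lift_lt.2 ((Cardinal.cantor _).trans hZ)
  have hcardo : Cardinal.lift.{1} lam ≤ o.card := by
    by_contra hlt
    push_neg at hlt
    exact absurd h4 (not_le.2 (Cardinal.mul_lt_of_lt (Cardinal.aleph0_le_lift.mpr hlam)
      hZlt hlt))
  rw [Cardinal.lift_ord, Cardinal.ord_le]
  exact hcardo
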